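/- Fix k ≥ 1 and n ≥ 2. There exists a constant c > 0 depending only on k and n such that for all 0 < σ < 1/2 and all 0 < δ < 1 with 1/δ ∈ ℕ, 2δ^{1-σ} ≤ 1 and δ^{σ-1} ≥ 200k³, the following holds: define F_k : ℝ^{n-1} → ℝ by F_k(ξ) = ∏_{j=1}^{n-1} g_k(ξ_j) and u_k(x,t) = ∫_{ℝ^{n-1}} e^{-πit|ξ|² + 2πi x·ξ} F_k(ξ) dξ. Then for every point (x,t) with x_j = ∑_{m=1}^k p_{j,m} δ^{-σ-m+1} and t = 2∑_{m=1}^k q_m δ^{-2σ-m+1}, where p_{j,m}, q_m ∈ ℕ satisfy p_{j,m} ≤ δ^{σ-1}/(100k³) and q_m ≤ δ^{2σ-1}/(100k³), one has |u_k(x,t)| ≥ c δ^{k(n-1)(1-σ)}. -/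

import Mathlib

open Real MeasureTheory

/-- The self-similar function
`g_k = ∑_{1 ≤ ℓ_1,…,ℓ_k ≤ δ^{-σ}} χ_{{s : |s - (ℓ_1δ^σ + ⋯ + ℓ_kδ^{σ+k-1})| ≤ δ^k}}`. -/
noncomputable def gk (k : ℕ) (δ σ : ℝ) (x : ℝ) : ℝ :=
  ∑ ℓ ∈ Fintype.piFinset (fun _ : Fin k => Finset.Icc 1 ⌊δ ^ (-σ)⌋₊),
    Set.indicator {s : ℝ | |s - ∑ r : Fin k, (ℓ r : ℝ) * δ ^ (σ + (r : ℕ))| ≤ δ ^ k}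
      (fun _ => (1 : ℝ)) x

/-- The solution `u_k(x,t) = ∫_{ℝ^{n-1}} e^{-πit|ξ|² + 2πi x·ξ} ∏_j g_k(ξ_j) dξ`. -/
noncomputable def schrodingerSolK (k n : ℕ) (δ σ : ℝ)
    (x : EuclideanSpace ℝ (Fin (n-1))) (t : ℝ) : ℂ :=
  ∫ ξ : EuclideanSpace ℝ (Fin (n-1)),
    Complex.exp (((-(π * t * ‖ξ‖ ^ 2) + 2 * π * (inner ℝ x ξ : ℝ) : ℝ) : ℂ) * Complex.I)
      * ((∏ j, gk k δ σ (ξ j) : ℝ) : ℂ)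


set_option maxHeartbeats 1000000 in
lemma phase_int (k : ℕ) (hk : 1 ≤ k) (σ δ : ℝ) (h0δ : 0 < δ) (hδ1 : δ < 1)
    (N : ℕ) (hN : δ⁻¹ = (N : ℝ))
    (p q : Fin k → ℕ)
    (hp : ∀ m, (p m : ℝ) ≤ δ ^ (σ - 1) / (100 * (k : ℝ) ^ 3))
    (hq : ∀ m, (q m : ℝ) ≤ δ ^ (2*σ - 1) / (100 * (k : ℝ) ^ 3))
    (ℓ : Fin k → ℕ) (hℓ : ∀ r, (ℓ r : ℝ) ≤ δ ^ (-σ))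
    (ξ : ℝ) (hξ : |ξ - ∑ r : Fin k, (ℓ r : ℝ) * δ ^ (σ + (r : ℕ))| ≤ δ ^ k) :
    ∃ M : ℤ, |(∑ m : Fin k, (p m : ℝ) * δ ^ (-σ - (m : ℕ))) * ξ
      - (∑ m : Fin k, (q m : ℝ) * δ ^ (-(2*σ) - (m : ℕ))) * ξ ^ 2 - M| ≤ 6/100 := by
  have hδ0 : (0:ℝ) ≤ δ := h0δ.le
  have hk1 : (1:ℝ) ≤ (k:ℝ) := by exact_mod_cast hk
  have hkpos : (0:ℝ) < 100 * (k:ℝ)^3 := by positivity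
  have hA : ∀ e e' : ℝ, δ ^ e * δ ^ e' = δ ^ (e + e') := fun e e' => (Real.rpow_add h0δ e e').symm
  have hle1 : ∀ e : ℝ, 0 ≤ e → δ ^ e ≤ 1 := fun e he => Real.rpow_le_one hδ0 hδ1.le he
  have hpos : ∀ e : ℝ, (0:ℝ) < δ ^ e := fun e => Real.rpow_pos_of_pos h0δ e
  have hint : ∀ c : ℕ, δ ^ (-(c:ℝ)) = ((N ^ c : ℕ) : ℝ) := by
    intro c
    rw [Real.rpow_neg hδ0, Real.rpow_natCast, ← inv_pow, hN, Nat.cast_pow]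
  -- abbreviations
  set a : ℝ := ∑ r : Fin k, (ℓ r : ℝ) * δ ^ (σ + (r : ℕ)) with ha_def
  set xj : ℝ := ∑ m : Fin k, (p m : ℝ) * δ ^ (-σ - (m : ℕ)) with hxj_def
  set t2 : ℝ := ∑ m : Fin k, (q m : ℝ) * δ ^ (-(2*σ) - (m : ℕ)) with ht2_def
  -- expansions
  have hS1 : xj * a = ∑ m : Fin k, ∑ r : Fin k,
      (p m : ℝ) * (ℓ r : ℝ) * δ ^ ((r:ℕ) - (m:ℕ) : ℝ) := by
    rw [hxj_def, ha_def, Finset.sum_mul_sum]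
    refine Finset.sum_congr rfl fun m _ => Finset.sum_congr rfl fun r _ => ?_
    rw [mul_mul_mul_comm, hA]
    congr 1
    push_cast; ring
  have hS2 : t2 * a ^ 2 = ∑ m : Fin k, ∑ r : Fin k, ∑ r' : Fin k,
      (q m : ℝ) * (ℓ r : ℝ) * (ℓ r' : ℝ) * δ ^ ((r:ℕ) + (r':ℕ) - (m:ℕ) : ℝ) := by
    have ha2 : a ^ 2 = ∑ r : Fin k, ∑ r' : Fin k,
        (ℓ r : ℝ) * δ ^ (σ + (r:ℕ)) * ((ℓ r' : ℝ) * δ ^ (σ + (r':ℕ))) := by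
      rw [sq, ha_def, Finset.sum_mul_sum]
    rw [ha2, ht2_def, Finset.sum_mul_sum]
    refine Finset.sum_congr rfl fun m _ => Finset.sum_congr rfl fun r _ => ?_
    rw [Finset.mul_sum]
    refine Finset.sum_congr rfl fun r' _ => ?_
    have : (q m : ℝ) * δ ^ (-(2*σ) - (m:ℕ))
        * ((ℓ r : ℝ) * δ ^ (σ + (r:ℕ)) * ((ℓ r' : ℝ) * δ ^ (σ + (r':ℕ))))
        = (q m : ℝ) * (ℓ r : ℝ) * (ℓ r' : ℝ)
          * (δ ^ (-(2*σ) - (m:ℕ)) * δ ^ (σ + (r:ℕ)) * δ ^ (σ + (r':ℕ))) := by ring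
    rw [this, hA, hA]
    congr 1
    push_cast; ring
  -- integer approximations
  set M1 : ℕ := ∑ m : Fin k, ∑ r : Fin k,
    if (r:ℕ) ≤ (m:ℕ) then p m * ℓ r * N ^ ((m:ℕ) - (r:ℕ)) else 0 with hM1_def
  set M2 : ℕ := ∑ m : Fin k, ∑ r : Fin k, ∑ r' : Fin k,
    if (r:ℕ) + (r':ℕ) ≤ (m:ℕ) then q m * ℓ r * ℓ r' * N ^ ((m:ℕ) - ((r:ℕ) + (r':ℕ))) else 0
    with hM2_def
  have hℓ0 : ∀ r, (0:ℝ) ≤ (ℓ r : ℝ) := fun r => Nat.cast_nonneg _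
  have hp0 : ∀ m, (0:ℝ) ≤ (p m : ℝ) := fun m => Nat.cast_nonneg _
  have hq0 : ∀ m, (0:ℝ) ≤ (q m : ℝ) := fun m => Nat.cast_nonneg _
  -- termwise bounds
  have hbound1 : ∀ m r : Fin k, ¬ ((r:ℕ) ≤ (m:ℕ)) →
      (p m : ℝ) * (ℓ r : ℝ) * δ ^ ((r:ℕ) - (m:ℕ) : ℝ) ≤ 1 / (100 * (k:ℝ)^3) := by
    intro m r h
    have hmr : ((m:ℕ):ℝ) + 1 ≤ ((r:ℕ):ℝ) := by
      have : (m:ℕ) + 1 ≤ (r:ℕ) := by omega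
      exact_mod_cast this
    calc (p m : ℝ) * (ℓ r : ℝ) * δ ^ ((r:ℕ) - (m:ℕ) : ℝ)
        ≤ (δ ^ (σ-1) / (100 * (k:ℝ)^3)) * δ ^ (-σ) * δ ^ ((r:ℕ) - (m:ℕ) : ℝ) := by
          gcongr <;> first | positivity | exact hp m | exact hℓ r
      _ = δ ^ ((σ-1) + (-σ) + ((r:ℕ) - (m:ℕ))) / (100 * (k:ℝ)^3) := by
          rw [div_mul_eq_mul_div, div_mul_eq_mul_div, hA, hA]
      _ ≤ 1 / (100 * (k:ℝ)^3) := by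
          gcongr
          exact hle1 _ (by linarith)
  have hbound2 : ∀ m r r' : Fin k, ¬ ((r:ℕ) + (r':ℕ) ≤ (m:ℕ)) →
      (q m : ℝ) * (ℓ r : ℝ) * (ℓ r' : ℝ) * δ ^ ((r:ℕ) + (r':ℕ) - (m:ℕ) : ℝ)
        ≤ 1 / (100 * (k:ℝ)^3) := by
    intro m r r' h
    have hmr : ((m:ℕ):ℝ) + 1 ≤ ((r:ℕ):ℝ) + ((r':ℕ):ℝ) := by
      have : (m:ℕ) + 1 ≤ (r:ℕ) + (r':ℕ) := by omega
      exact_mod_cast this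
    calc (q m : ℝ) * (ℓ r : ℝ) * (ℓ r' : ℝ) * δ ^ ((r:ℕ) + (r':ℕ) - (m:ℕ) : ℝ)
        ≤ (δ ^ (2*σ-1) / (100 * (k:ℝ)^3)) * δ ^ (-σ) * δ ^ (-σ)
            * δ ^ ((r:ℕ) + (r':ℕ) - (m:ℕ) : ℝ) := by
          gcongr <;> first | positivity | exact hq m | exact hℓ r | exact hℓ r'
      _ = δ ^ ((2*σ-1) + (-σ) + (-σ) + ((r:ℕ) + (r':ℕ) - (m:ℕ))) / (100 * (k:ℝ)^3) := by
          rw [div_mul_eq_mul_div, div_mul_eq_mul_div, div_mul_eq_mul_div, hA, hA, hA]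
      _ ≤ 1 / (100 * (k:ℝ)^3) := by
          gcongr
          exact hle1 _ (by linarith)
  -- integer equalities on the "low" terms
  have heq1 : ∀ m r : Fin k, (r:ℕ) ≤ (m:ℕ) →
      (p m : ℝ) * (ℓ r : ℝ) * δ ^ ((r:ℕ) - (m:ℕ) : ℝ)
        = ((p m * ℓ r * N ^ ((m:ℕ) - (r:ℕ)) : ℕ) : ℝ) := by
    intro m r h
    have he : (((r:ℕ):ℝ) - ((m:ℕ):ℝ)) = -((((m:ℕ) - (r:ℕ) : ℕ)):ℝ) := by
      rw [Nat.cast_sub h]; ring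
    rw [he, hint]
    push_cast
    ring
  have heq2 : ∀ m r r' : Fin k, (r:ℕ) + (r':ℕ) ≤ (m:ℕ) →
      (q m : ℝ) * (ℓ r : ℝ) * (ℓ r' : ℝ) * δ ^ ((r:ℕ) + (r':ℕ) - (m:ℕ) : ℝ)
        = ((q m * ℓ r * ℓ r' * N ^ ((m:ℕ) - ((r:ℕ) + (r':ℕ))) : ℕ) : ℝ) := by
    intro m r r' h
    have he : (((r:ℕ):ℝ) + ((r':ℕ):ℝ) - ((m:ℕ):ℝ)) = -((((m:ℕ) - ((r:ℕ) + (r':ℕ)) : ℕ)):ℝ) := by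
      rw [Nat.cast_sub h]; push_cast; ring
    rw [he, hint]
    push_cast
    ring
  -- |S1 - M1|
  have hS1M1 : |xj * a - (M1:ℝ)| ≤ (k:ℝ)^2 / (100 * (k:ℝ)^3) := by
    have hcast : (M1:ℝ) = ∑ m : Fin k, ∑ r : Fin k,
        if (r:ℕ) ≤ (m:ℕ) then ((p m * ℓ r * N ^ ((m:ℕ) - (r:ℕ)) : ℕ) : ℝ) else 0 := by
      rw [hM1_def]; push_cast [apply_ite (fun x : ℕ => (x:ℝ))]; rfl
    rw [hS1, hcast, ← Finset.sum_sub_distrib]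
    calc |∑ m : Fin k, (∑ r : Fin k, (p m : ℝ) * (ℓ r : ℝ) * δ ^ ((r:ℕ) - (m:ℕ) : ℝ)
          - ∑ r : Fin k, if (r:ℕ) ≤ (m:ℕ) then ((p m * ℓ r * N ^ ((m:ℕ) - (r:ℕ)) : ℕ) : ℝ) else 0)|
        ≤ ∑ m : Fin k, ∑ r : Fin k, |(p m : ℝ) * (ℓ r : ℝ) * δ ^ ((r:ℕ) - (m:ℕ) : ℝ)
            - if (r:ℕ) ≤ (m:ℕ) then ((p m * ℓ r * N ^ ((m:ℕ) - (r:ℕ)) : ℕ) : ℝ) else 0| := by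
          refine (Finset.abs_sum_le_sum_abs _ _).trans ?_
          refine Finset.sum_le_sum fun m _ => ?_
          rw [← Finset.sum_sub_distrib]
          exact Finset.abs_sum_le_sum_abs _ _
      _ ≤ ∑ _m : Fin k, ∑ _r : Fin k, 1 / (100 * (k:ℝ)^3) := by
          refine Finset.sum_le_sum fun m _ => Finset.sum_le_sum fun r _ => ?_
          by_cases h : (r:ℕ) ≤ (m:ℕ)
          · rw [if_pos h, heq1 m r h, sub_self, abs_zero]
            positivity
          · rw [if_neg h, sub_zero, abs_of_nonneg (by positivity)]
            exact hbound1 m r h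
      _ = (k:ℝ)^2 / (100 * (k:ℝ)^3) := by
          simp [Finset.sum_const, Finset.card_univ]
          ring
  -- |S2 - M2|
  have hS2M2 : |t2 * a^2 - (M2:ℝ)| ≤ (k:ℝ)^3 / (100 * (k:ℝ)^3) := by
    have hcast : (M2:ℝ) = ∑ m : Fin k, ∑ r : Fin k, ∑ r' : Fin k,
        if (r:ℕ) + (r':ℕ) ≤ (m:ℕ)
        then ((q m * ℓ r * ℓ r' * N ^ ((m:ℕ) - ((r:ℕ) + (r':ℕ))) : ℕ) : ℝ) else 0 := by
      rw [hM2_def]; push_cast [apply_ite (fun x : ℕ => (x:ℝ))]; rfl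
    rw [hS2, hcast, ← Finset.sum_sub_distrib]
    calc _ ≤ ∑ m : Fin k, ∑ r : Fin k, ∑ r' : Fin k,
          |(q m : ℝ) * (ℓ r : ℝ) * (ℓ r' : ℝ) * δ ^ ((r:ℕ) + (r':ℕ) - (m:ℕ) : ℝ)
            - if (r:ℕ) + (r':ℕ) ≤ (m:ℕ)
              then ((q m * ℓ r * ℓ r' * N ^ ((m:ℕ) - ((r:ℕ) + (r':ℕ))) : ℕ) : ℝ) else 0| := by
          refine (Finset.abs_sum_le_sum_abs _ _).trans ?_
          refine Finset.sum_le_sum fun m _ => ?_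
          rw [← Finset.sum_sub_distrib]
          refine (Finset.abs_sum_le_sum_abs _ _).trans ?_
          refine Finset.sum_le_sum fun r _ => ?_
          rw [← Finset.sum_sub_distrib]
          exact Finset.abs_sum_le_sum_abs _ _
      _ ≤ ∑ _m : Fin k, ∑ _r : Fin k, ∑ _r' : Fin k, 1 / (100 * (k:ℝ)^3) := by
          refine Finset.sum_le_sum fun m _ => Finset.sum_le_sum fun r _ =>
            Finset.sum_le_sum fun r' _ => ?_
          by_cases h : (r:ℕ) + (r':ℕ) ≤ (m:ℕ)
          · rw [if_pos h, heq2 m r r' h, sub_self, abs_zero]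
            positivity
          · rw [if_neg h, sub_zero, abs_of_nonneg (by positivity)]
            exact hbound2 m r r' h
      _ = (k:ℝ)^3 / (100 * (k:ℝ)^3) := by
          simp [Finset.sum_const, Finset.card_univ]
          ring
  -- final assembly
  refine ⟨(M1:ℤ) - (M2:ℤ), ?_⟩
  have hxj0 : 0 ≤ xj := by rw [hxj_def]; positivity
  have ht20 : 0 ≤ t2 := by rw [ht2_def]; positivity
  have ha0 : 0 ≤ a := by rw [ha_def]; positivity
  have hDk : ∀ m : Fin k, δ ^ (-1 - ((m:ℕ):ℝ)) ≤ δ ^ (-(k:ℝ)) := by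
    intro m
    apply Real.rpow_le_rpow_of_exponent_ge h0δ hδ1.le
    have hmk : ((m:ℕ):ℝ) ≤ (k:ℝ) - 1 := by
      have : (m:ℕ) + 1 ≤ k := m.isLt
      have := (Nat.cast_le (α := ℝ)).2 this
      push_cast at this
      linarith
    linarith
  have hxj_le : xj ≤ (k:ℝ) * δ ^ (-(k:ℝ)) / (100 * (k:ℝ)^3) := by
    rw [hxj_def]
    calc ∑ m : Fin k, (p m : ℝ) * δ ^ (-σ - (m : ℕ))
        ≤ ∑ m : Fin k, (δ ^ (σ-1) / (100 * (k:ℝ)^3)) * δ ^ (-σ - (m : ℕ)) := by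
          gcongr with m _ <;> first | positivity | exact hp m
      _ = ∑ m : Fin k, δ ^ (-1 - ((m:ℕ):ℝ)) / (100 * (k:ℝ)^3) := by
          refine Finset.sum_congr rfl fun m _ => ?_
          rw [div_mul_eq_mul_div, hA]
          congr 2
          ring
      _ ≤ ∑ _m : Fin k, δ ^ (-(k:ℝ)) / (100 * (k:ℝ)^3) := by
          exact Finset.sum_le_sum fun m _ => by
            have := hDk m
            gcongr
      _ = (k:ℝ) * δ ^ (-(k:ℝ)) / (100 * (k:ℝ)^3) := by
          rw [Finset.sum_const, Finset.card_univ, Fintype.card_fin, nsmul_eq_mul]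
          ring
  have ht2_le : t2 ≤ (k:ℝ) * δ ^ (-(k:ℝ)) / (100 * (k:ℝ)^3) := by
    rw [ht2_def]
    calc ∑ m : Fin k, (q m : ℝ) * δ ^ (-(2*σ) - (m : ℕ))
        ≤ ∑ m : Fin k, (δ ^ (2*σ-1) / (100 * (k:ℝ)^3)) * δ ^ (-(2*σ) - (m : ℕ)) := by
          gcongr with m _ <;> first | positivity | exact hq m
      _ = ∑ m : Fin k, δ ^ (-1 - ((m:ℕ):ℝ)) / (100 * (k:ℝ)^3) := by
          refine Finset.sum_congr rfl fun m _ => ?_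
          rw [div_mul_eq_mul_div, hA]
          congr 2
          ring
      _ ≤ ∑ _m : Fin k, δ ^ (-(k:ℝ)) / (100 * (k:ℝ)^3) := by
          exact Finset.sum_le_sum fun m _ => by
            have := hDk m
            gcongr
      _ = (k:ℝ) * δ ^ (-(k:ℝ)) / (100 * (k:ℝ)^3) := by
          rw [Finset.sum_const, Finset.card_univ, Fintype.card_fin, nsmul_eq_mul]
          ring
  have ha_le : a ≤ (k:ℝ) := by
    rw [ha_def]
    calc ∑ r : Fin k, (ℓ r : ℝ) * δ ^ (σ + (r : ℕ))
        ≤ ∑ _r : Fin k, (1:ℝ) := by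
          refine Finset.sum_le_sum fun r _ => ?_
          calc (ℓ r : ℝ) * δ ^ (σ + (r : ℕ))
              ≤ δ ^ (-σ) * δ ^ (σ + (r : ℕ)) := by
                gcongr <;> first | positivity | exact hℓ r
            _ = δ ^ (-σ + (σ + ((r:ℕ):ℝ))) := hA _ _
            _ ≤ 1 := hle1 _ (by
                  have : (0:ℝ) ≤ ((r:ℕ):ℝ) := Nat.cast_nonneg _
                  linarith)
      _ = (k:ℝ) := by
          rw [Finset.sum_const, Finset.card_univ, Fintype.card_fin, nsmul_eq_mul, mul_one]
  have hδk1 : δ ^ k ≤ 1 := pow_le_one₀ hδ0 hδ1.le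
  have hξa_sum : |ξ + a| ≤ 3 * (k:ℝ) := by
    have h1 : |ξ| - |a| ≤ |ξ - a| := abs_sub_abs_le_abs_sub ξ a
    have h2 : |a| = a := abs_of_nonneg ha0
    have h3 : |ξ + a| ≤ |ξ| + |a| := abs_add_le ξ a
    have h4 : (0:ℝ) ≤ δ ^ k := by positivity
    linarith [hξ, ha_le, hδk1, hk1]
  have hcancel : δ ^ (-(k:ℝ)) * δ ^ k = 1 := by
    rw [← Real.rpow_natCast δ k, hA, neg_add_cancel, Real.rpow_zero]
  have e1 : xj * |ξ - a| ≤ (k:ℝ) / (100 * (k:ℝ)^3) := by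
    calc xj * |ξ - a| ≤ ((k:ℝ) * δ ^ (-(k:ℝ)) / (100 * (k:ℝ)^3)) * δ ^ k :=
          mul_le_mul hxj_le hξ (abs_nonneg _) (by positivity)
      _ = (k:ℝ) * (δ ^ (-(k:ℝ)) * δ ^ k) / (100 * (k:ℝ)^3) := by ring
      _ = (k:ℝ) / (100 * (k:ℝ)^3) := by rw [hcancel, mul_one]
  have e2 : t2 * (|ξ + a| * |ξ - a|) ≤ 3 * (k:ℝ)^2 / (100 * (k:ℝ)^3) := by
    have h1 : |ξ + a| * |ξ - a| ≤ (3 * (k:ℝ)) * δ ^ k :=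
      mul_le_mul hξa_sum hξ (abs_nonneg _) (by positivity)
    calc t2 * (|ξ + a| * |ξ - a|) ≤ ((k:ℝ) * δ ^ (-(k:ℝ)) / (100 * (k:ℝ)^3)) * ((3 * (k:ℝ)) * δ ^ k) :=
          mul_le_mul ht2_le h1 (by positivity) (by positivity)
      _ = 3 * (k:ℝ)^2 * (δ ^ (-(k:ℝ)) * δ ^ k) / (100 * (k:ℝ)^3) := by ring
      _ = 3 * (k:ℝ)^2 / (100 * (k:ℝ)^3) := by rw [hcancel, mul_one]
  have hdecomp : xj * ξ - t2 * ξ^2 - (((M1:ℤ) - (M2:ℤ) : ℤ) : ℝ)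
      = (xj * a - (M1:ℝ)) - (t2 * a^2 - (M2:ℝ)) + xj * (ξ - a) - t2 * ((ξ + a) * (ξ - a)) := by
    push_cast
    ring
  rw [hdecomp]
  have tri : ∀ A B C D : ℝ, |A - B + C - D| ≤ |A| + |B| + |C| + |D| := by
    intro A B C D
    calc |A - B + C - D| ≤ |A - B + C| + |D| := abs_sub _ _
      _ ≤ (|A - B| + |C|) + |D| := by gcongr; exact abs_add_le _ _
      _ ≤ ((|A| + |B|) + |C|) + |D| := by gcongr; exact abs_sub _ _
      _ = |A| + |B| + |C| + |D| := by ring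
  refine le_trans (tri _ _ _ _) ?_
  have habs3 : |xj * (ξ - a)| ≤ (k:ℝ) / (100 * (k:ℝ)^3) := by
    rw [abs_mul, abs_of_nonneg hxj0]
    exact e1
  have habs4 : |t2 * ((ξ + a) * (ξ - a))| ≤ 3 * (k:ℝ)^2 / (100 * (k:ℝ)^3) := by
    rw [abs_mul, abs_of_nonneg ht20, abs_mul]
    exact e2
  have hnum : (k:ℝ)^2 / (100 * (k:ℝ)^3) + (k:ℝ)^3 / (100 * (k:ℝ)^3)
      + (k:ℝ) / (100 * (k:ℝ)^3) + 3 * (k:ℝ)^2 / (100 * (k:ℝ)^3) ≤ 6 / 100 := by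
    have hk2 : (k:ℝ) ≤ (k:ℝ)^3 := by
      calc (k:ℝ) = (k:ℝ)^1 := (pow_one _).symm
        _ ≤ (k:ℝ)^3 := pow_le_pow_right₀ hk1 (by norm_num)
    have hk3' : (k:ℝ)^2 ≤ (k:ℝ)^3 := pow_le_pow_right₀ hk1 (by norm_num)
    rw [← add_div, ← add_div, ← add_div,
      div_le_div_iff₀ hkpos (by norm_num : (0:ℝ) < 100)]
    linarith
  exact le_trans (add_le_add (add_le_add (add_le_add hS1M1 hS2M2) habs3) habs4) hnum

set_option maxHeartbeats 1000000 in
lemma cos_phase (k : ℕ) (hk : 1 ≤ k) (σ δ : ℝ) (h0δ : 0 < δ) (hδ1 : δ < 1)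
    (N : ℕ) (hN : δ⁻¹ = (N : ℝ))
    (p q : Fin k → ℕ)
    (hp : ∀ m, (p m : ℝ) ≤ δ ^ (σ - 1) / (100 * (k : ℝ) ^ 3))
    (hq : ∀ m, (q m : ℝ) ≤ δ ^ (2*σ - 1) / (100 * (k : ℝ) ^ 3))
    (ℓ : Fin k → ℕ) (hℓ : ∀ r, (ℓ r : ℝ) ≤ δ ^ (-σ))
    (ξ : ℝ) (hξ : |ξ - ∑ r : Fin k, (ℓ r : ℝ) * δ ^ (σ + (r : ℕ))| ≤ δ ^ k)
    (xj t : ℝ)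
    (hxj : xj = ∑ m : Fin k, (p m : ℝ) * δ ^ (-σ - (m : ℕ)))
    (ht : t = 2 * ∑ m : Fin k, (q m : ℝ) * δ ^ (-(2*σ) - (m : ℕ))) :
    (1:ℝ)/2 ≤ Real.cos (-(π * t * ξ^2) + 2*π*(xj*ξ)) := by
  obtain ⟨M, hM⟩ := phase_int k hk σ δ h0δ hδ1 N hN p q hp hq ℓ hℓ ξ hξ
  set v : ℝ := (∑ m : Fin k, (p m : ℝ) * δ ^ (-σ - (m : ℕ))) * ξ
    - (∑ m : Fin k, (q m : ℝ) * δ ^ (-(2*σ) - (m : ℕ))) * ξ^2 with hv_def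
  have harg : (-(π * t * ξ^2) + 2*π*(xj*ξ)) = 2*π*v - M * (2*π) + M * (2*π) := by
    rw [hv_def, ht, hxj]; ring
  rw [harg]
  have : Real.cos (2*π*v - M * (2*π) + M * (2*π))
      = Real.cos (2*π*v - M * (2*π)) := by
    have := Real.cos_sub_int_mul_two_pi (2*π*v - M * (2*π) + M * (2*π)) M
    rw [← this]; congr 1; ring
  rw [this]
  set y : ℝ := 2*π*v - M * (2*π) with hy_def
  have hyabs : |y| ≤ π/3 := by
    have h1 : y = 2*π*(v - M) := by rw [hy_def]; ring
    have h2 : |y| = 2*π*|v - M| := by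
      rw [h1, abs_mul, abs_of_pos (by positivity : (0:ℝ) < 2*π)]
    rw [h2]
    calc 2*π*|v - M| ≤ 2*π*(6/100) := by gcongr
      _ ≤ π/3 := by nlinarith [pi_pos]
  calc (1:ℝ)/2 = Real.cos (π/3) := Real.cos_pi_div_three.symm
    _ ≤ Real.cos |y| :=
        Real.cos_le_cos_of_nonneg_of_le_pi (abs_nonneg _) (by linarith [pi_pos]) hyabs
    _ = Real.cos y := Real.cos_abs y

set_option maxHeartbeats 1000000 in
lemma oneDim (k : ℕ) (hk : 1 ≤ k) (σ δ : ℝ) (hσ0 : 0 < σ) (h0δ : 0 < δ) (hδ1 : δ < 1)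
    (N : ℕ) (hN : δ⁻¹ = (N : ℝ))
    (p q : Fin k → ℕ)
    (hp : ∀ m, (p m : ℝ) ≤ δ ^ (σ - 1) / (100 * (k : ℝ) ^ 3))
    (hq : ∀ m, (q m : ℝ) ≤ δ ^ (2*σ - 1) / (100 * (k : ℝ) ^ 3))
    (xj t : ℝ)
    (hxj : xj = ∑ m : Fin k, (p m : ℝ) * δ ^ (-σ - (m : ℕ)))
    (ht : t = 2 * ∑ m : Fin k, (q m : ℝ) * δ ^ (-(2*σ) - (m : ℕ))) :
    ((⌊δ ^ (-σ)⌋₊ ^ k : ℕ) : ℝ) * δ ^ k ≤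
      (∫ ξ : ℝ, Complex.exp (((-(π * t * ξ^2) + 2*π*(xj*ξ) : ℝ) : ℂ) * Complex.I)
        * ((gk k δ σ ξ : ℝ) : ℂ)).re := by
  set L : ℕ := ⌊δ ^ (-σ)⌋₊ with hL_def
  set f : ℝ → ℂ := fun ξ => Complex.exp (((-(π * t * ξ^2) + 2*π*(xj*ξ) : ℝ) : ℂ) * Complex.I)
    with hf_def
  have hfc : Continuous f := by
    apply Complex.continuous_exp.comp
    fun_prop
  set S := Fintype.piFinset (fun _ : Fin k => Finset.Icc 1 L) with hS_def
  set a : (Fin k → ℕ) → ℝ := fun ℓ => ∑ r : Fin k, (ℓ r : ℝ) * δ ^ (σ + (r : ℕ)) with ha_def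
  have hδk0 : (0:ℝ) < δ ^ k := by positivity
  have hsetIcc : ∀ ℓ : Fin k → ℕ,
      {s : ℝ | |s - a ℓ| ≤ δ ^ k} = Set.Icc (a ℓ - δ ^ k) (a ℓ + δ ^ k) := by
    intro ℓ
    ext s
    rw [Set.mem_setOf_eq, Set.mem_Icc, abs_sub_le_iff]
    constructor
    · rintro ⟨h1, h2⟩; constructor <;> linarith
    · rintro ⟨h1, h2⟩; constructor <;> linarith
  have hIntOn : ∀ ℓ : Fin k → ℕ, IntegrableOn f (Set.Icc (a ℓ - δ ^ k) (a ℓ + δ ^ k)) :=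
    fun ℓ => hfc.integrableOn_Icc
  have hInt : ∀ ℓ : Fin k → ℕ,
      Integrable ((Set.Icc (a ℓ - δ ^ k) (a ℓ + δ ^ k)).indicator f) := by
    intro ℓ
    rw [integrable_indicator_iff measurableSet_Icc]
    exact hIntOn ℓ
  have hkey : (fun ξ : ℝ => f ξ * ((gk k δ σ ξ : ℝ) : ℂ))
      = fun ξ : ℝ => ∑ ℓ ∈ S, (Set.Icc (a ℓ - δ ^ k) (a ℓ + δ ^ k)).indicator f ξ := by
    funext ξ
    rw [gk]
    push_cast
    rw [Finset.mul_sum]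
    refine Finset.sum_congr rfl fun ℓ _ => ?_
    rw [← hsetIcc ℓ]
    by_cases h : ξ ∈ {s : ℝ | |s - a ℓ| ≤ δ ^ k}
    · have h' : ξ ∈ {s : ℝ | |s - ∑ r : Fin k, (ℓ r : ℝ) * δ ^ (σ + (r : ℕ))| ≤ δ ^ k} := h
      simp [Set.indicator_of_mem h, Set.indicator_of_mem h']
    · have h' : ξ ∉ {s : ℝ | |s - ∑ r : Fin k, (ℓ r : ℝ) * δ ^ (σ + (r : ℕ))| ≤ δ ^ k} := h
      simp [Set.indicator_of_notMem h, Set.indicator_of_notMem h']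
  rw [hkey, integral_finset_sum S fun ℓ _ => hInt ℓ, Complex.re_sum]
  have hterm : ∀ ℓ ∈ S, δ ^ k ≤ (∫ ξ, (Set.Icc (a ℓ - δ ^ k) (a ℓ + δ ^ k)).indicator f ξ).re := by
    intro ℓ hℓS
    have hℓ : ∀ r, (ℓ r : ℝ) ≤ δ ^ (-σ) := by
      intro r
      have := (Fintype.mem_piFinset.mp hℓS) r
      have h2 := (Finset.mem_Icc.mp this).2
      calc (ℓ r : ℝ) ≤ (L : ℝ) := by exact_mod_cast h2
        _ ≤ δ ^ (-σ) := Nat.floor_le (by positivity)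
    rw [integral_indicator measurableSet_Icc]
    have hre := integral_re (μ := volume.restrict (Set.Icc (a ℓ - δ ^ k) (a ℓ + δ ^ k))) (hIntOn ℓ)
    simp only [RCLike.re_to_complex] at hre
    rw [← hre]
    have hfre : ∀ ξ : ℝ, (f ξ).re = Real.cos (-(π * t * ξ^2) + 2*π*(xj*ξ)) := by
      intro ξ
      rw [hf_def]
      exact Complex.exp_ofReal_mul_I_re _
    calc δ ^ k = (1/2) * (volume (Set.Icc (a ℓ - δ ^ k) (a ℓ + δ ^ k))).toReal := by
          rw [Real.volume_Icc, ENNReal.toReal_ofReal (by linarith)]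
          ring
      _ ≤ ∫ ξ in Set.Icc (a ℓ - δ ^ k) (a ℓ + δ ^ k), (f ξ).re := by
          rw [mul_comm (1/2 : ℝ), ← smul_eq_mul]
          refine setIntegral_ge_of_const_le measurableSet_Icc ?_ ?_ ?_
          · rw [Real.volume_Icc]
            exact ENNReal.ofReal_ne_top
          · intro ξ hmem
            rw [hfre ξ]
            have hξa : |ξ - a ℓ| ≤ δ ^ k := by
              have : ξ ∈ {s : ℝ | |s - a ℓ| ≤ δ ^ k} := by rw [hsetIcc]; exact hmem
              exact this
            exact cos_phase k hk σ δ h0δ hδ1 N hN p q hp hq ℓ hℓ ξ hξa xj t hxj ht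
          · exact (Complex.continuous_re.comp hfc).integrableOn_Icc
  have hcard : S.card = L ^ k := by
    rw [hS_def, Fintype.card_piFinset]
    simp [Nat.card_Icc]
  calc ((L ^ k : ℕ) : ℝ) * δ ^ k = S.card • (δ ^ k) := by
        rw [hcard, nsmul_eq_mul]
    _ ≤ ∑ ℓ ∈ S, (∫ ξ, (Set.Icc (a ℓ - δ ^ k) (a ℓ + δ ^ k)).indicator f ξ).re :=
        Finset.card_nsmul_le_sum S _ _ hterm

set_option maxHeartbeats 1000000 in
lemma factor (k n : ℕ) (δ σ : ℝ) (x : EuclideanSpace ℝ (Fin (n-1))) (t : ℝ) :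
    schrodingerSolK k n δ σ x t
      = ∏ j : Fin (n-1), ∫ ξ : ℝ,
          Complex.exp (((-(π * t * ξ^2) + 2*π*(x j * ξ) : ℝ) : ℂ) * Complex.I)
            * ((gk k δ σ ξ : ℝ) : ℂ) := by
  set F : Fin (n-1) → ℝ → ℂ := fun j ξ =>
    Complex.exp (((-(π * t * ξ^2) + 2*π*(x j * ξ) : ℝ) : ℂ) * Complex.I)
      * ((gk k δ σ ξ : ℝ) : ℂ) with hF_def
  have hsplit : ∀ ξ : EuclideanSpace ℝ (Fin (n-1)),
      Complex.exp (((-(π * t * ‖ξ‖ ^ 2) + 2 * π * (inner ℝ x ξ : ℝ) : ℝ) : ℂ) * Complex.I)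
        * ((∏ j, gk k δ σ (ξ j) : ℝ) : ℂ)
      = ∏ j, F j (ξ j) := by
    intro ξ
    have hnorm : ‖ξ‖ ^ 2 = ∑ j, (ξ j)^2 := by
      rw [EuclideanSpace.norm_eq, Real.sq_sqrt (by positivity)]
      refine Finset.sum_congr rfl fun j _ => by rw [Real.norm_eq_abs, sq_abs]
    have hinner : (inner ℝ x ξ : ℝ) = ∑ j, x j * ξ j := by
      simp [PiLp.inner_apply, RCLike.inner_apply, conj_trivial]
      exact Finset.sum_congr rfl fun _ _ => mul_comm _ _
    rw [hnorm, hinner]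
    have hphase : (-(π * t * ∑ j, (ξ j)^2) + 2 * π * ∑ j, x j * ξ j)
        = ∑ j, (-(π * t * (ξ j)^2) + 2*π*(x j * ξ j)) := by
      rw [Finset.sum_add_distrib, Finset.mul_sum, Finset.mul_sum, ← Finset.sum_neg_distrib]
    rw [hphase, Complex.ofReal_sum, Finset.sum_mul, Complex.exp_sum, Complex.ofReal_prod,
      ← Finset.prod_mul_distrib]
  rw [schrodingerSolK]
  simp_rw [hsplit]
  calc (∫ ξ : EuclideanSpace ℝ (Fin (n-1)), ∏ j, F j (ξ j))
      = ∫ y : Fin (n-1) → ℝ, ∏ j, F j (y j) :=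
        ((MeasurePreserving.symm (MeasurableEquiv.toLp 2 (Fin (n-1) → ℝ)).symm
          (EuclideanSpace.volume_preserving_symm_measurableEquiv_toLp (Fin (n-1)))).integral_comp'
          (fun ξ => ∏ j, F j (ξ j))).symm
    _ = ∏ j, ∫ ξ : ℝ, F j ξ := MeasureTheory.integral_fintype_prod_eq_prod (ι := Fin (n-1)) F


/-- For fixed `k ≥ 1` and `n ≥ 2` there is `c > 0` depending only on `k`
and `n` such that for admissible `σ, δ` and every lattice point `(x,t)` of `Λ_k`,
`|u_k(x,t)| ≥ c δ^{k(n-1)(1-σ)}`. -/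
theorem stmt11 (k n : ℕ) (hk : 1 ≤ k) (hn : 2 ≤ n) :
    ∃ c : ℝ, 0 < c ∧
      ∀ σ δ : ℝ, 0 < σ → σ < 1/2 → 0 < δ → δ < 1 →
        (∃ N : ℕ, 0 < N ∧ δ⁻¹ = (N : ℝ)) →
        2 * δ ^ (1 - σ) ≤ 1 → 200 * (k : ℝ) ^ 3 ≤ δ ^ (σ - 1) →
      ∀ (p : Fin (n-1) → Fin k → ℕ) (q : Fin k → ℕ),
        (∀ j m, (p j m : ℝ) ≤ δ ^ (σ - 1) / (100 * (k : ℝ) ^ 3)) →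
        (∀ m, (q m : ℝ) ≤ δ ^ (2*σ - 1) / (100 * (k : ℝ) ^ 3)) →
      ∀ (x : EuclideanSpace ℝ (Fin (n-1))) (t : ℝ),
        (∀ j, x j = ∑ m : Fin k, (p j m : ℝ) * δ ^ (-σ - (m : ℕ))) →
        t = 2 * ∑ m : Fin k, (q m : ℝ) * δ ^ (-(2*σ) - (m : ℕ)) →
        c * δ ^ ((k : ℝ) * ((n : ℝ) - 1) * (1 - σ)) ≤
          ‖schrodingerSolK k n δ σ x t‖ := by
  refine ⟨(1/2 : ℝ)^(k*(n-1)), by positivity, ?_⟩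
  intro σ δ hσ0 hσ h0δ hδ1 hNex h2δ h200 p q hp hq x t hx ht
  obtain ⟨N, hN0, hN⟩ := hNex
  set L : ℕ := ⌊δ^(-σ)⌋₊ with hL_def
  have h1d : ∀ j : Fin (n-1), ((L^k : ℕ):ℝ) * δ^k ≤
      (∫ ξ:ℝ, Complex.exp (((-(π * t * ξ^2) + 2*π*(x j * ξ) : ℝ) : ℂ) * Complex.I)
        * ((gk k δ σ ξ : ℝ) : ℂ)).re := fun j =>
    oneDim k hk σ δ hσ0 h0δ hδ1 N hN (p j) q (hp j) hq (x j) t (hx j) ht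
  have hnn : (0:ℝ) ≤ ((L^k:ℕ):ℝ) * δ^k := by positivity
  have hprod : (((L^k:ℕ):ℝ) * δ^k)^(n-1) ≤ ‖schrodingerSolK k n δ σ x t‖ := by
    rw [factor k n δ σ x t, norm_prod]
    calc (((L^k:ℕ):ℝ) * δ^k)^(n-1)
        = ∏ _j : Fin (n-1), ((L^k:ℕ):ℝ) * δ^k := by
          rw [Finset.prod_const, Finset.card_univ, Fintype.card_fin]
      _ ≤ ∏ j : Fin (n-1), ‖(∫ ξ:ℝ,
            Complex.exp (((-(π * t * ξ^2) + 2*π*(x j * ξ) : ℝ) : ℂ) * Complex.I)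
              * ((gk k δ σ ξ : ℝ) : ℂ))‖ :=
          Finset.prod_le_prod (fun _ _ => hnn)
            (fun j _ => (h1d j).trans (Complex.re_le_norm _))
  refine le_trans ?_ hprod
  -- arithmetic
  have h1x : (1:ℝ) ≤ δ^(-σ) := by
    calc (1:ℝ) = δ^(0:ℝ) := (Real.rpow_zero δ).symm
      _ ≤ δ^(-σ) := Real.rpow_le_rpow_of_exponent_ge h0δ hδ1.le (by linarith)
  have hLge : δ^(-σ)/2 ≤ (L:ℝ) := by
    rcases le_or_gt 2 (δ^(-σ)) with h | h
    · have := Nat.sub_one_lt_floor (δ^(-σ))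
      linarith
    · have hL1 : (1:ℕ) ≤ L := Nat.le_floor (by exact_mod_cast h1x)
      have : (1:ℝ) ≤ (L:ℝ) := by exact_mod_cast hL1
      linarith
  have hbase : (δ^(1-σ)/2) ^ k ≤ ((L^k : ℕ):ℝ) * δ^k := by
    have h1 : δ^(1-σ)/2 = (δ^(-σ)/2) * δ := by
      have h2 : δ^(1-σ) = δ^(-σ) * δ := by
        nth_rewrite 3 [← Real.rpow_one δ]
        rw [← Real.rpow_add h0δ]
        ring_nf
      rw [h2]
      ring
    rw [h1, mul_pow, Nat.cast_pow]
    gcongr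
  calc (1/2 : ℝ)^(k*(n-1)) * δ ^ ((k : ℝ) * ((n : ℝ) - 1) * (1 - σ))
      = (1/2 : ℝ)^(k*(n-1)) * (δ^(1-σ))^(k*(n-1)) := by
        congr 1
        rw [← Real.rpow_natCast (δ^(1-σ)) (k*(n-1)), ← Real.rpow_mul h0δ.le]
        congr 1
        have hcast : ((k*(n-1) : ℕ):ℝ) = (k:ℝ) * ((n:ℝ) - 1) := by
          push_cast [Nat.cast_sub (by omega : 1 ≤ n)]
          ring
        rw [hcast]
        ring
    _ = ((δ^(1-σ)/2) ^ k)^(n-1) := by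
        rw [← mul_pow, ← pow_mul]
        congr 1
        ring
    _ ≤ (((L^k:ℕ):ℝ) * δ^k)^(n-1) := pow_le_pow_left₀ (by positivity) hbase (n-1)
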